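/- The graph Q obtained from the octahedron K_{2,2,2} by deleting the edges of one triangle satisfies: τ(Q) = 2, and Q contains none of K₄, K_{2,3}, or K₃ ∪ K₃ (disjoint union of two triangles) as a minor. -/

import Mathlib

open SimpleGraph

universe u v

section Defs

variable {V : Type u} {W : Type v}

/-- A path decomposition of `G`: a sequence of bags covering all edges and vertices,
with each vertex appearing in a consecutive interval of bags. -/
structure PathDecomp (G : SimpleGraph V) where
  n : ℕ
  bag : Fin (n + 1) → Finset V
  cov_edge : ∀ ⦃u w : V⦄, G.Adj u w → ∃ i, u ∈ bag i ∧ w ∈ bag i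
  cov_vert : ∀ x : V, ∃ i, x ∈ bag i
  interval : ∀ (x : V) (i j k : Fin (n + 1)), i ≤ j → j ≤ k →
    x ∈ bag i → x ∈ bag k → x ∈ bag j

/-- The pathwidth of `G` is at most `w`. -/
def pwLE (G : SimpleGraph V) (w : ℕ) : Prop :=
  ∃ D : PathDecomp G, ∀ i, (D.bag i).card ≤ w + 1

/-- The rooted pathwidth of `G` at `x` is at most `r`: there is a path decomposition
of width `≤ r` whose last bag contains `x`. -/
def rpwLE (G : SimpleGraph V) (x : V) (r : ℕ) : Prop :=
  ∃ D : PathDecomp G, x ∈ D.bag (Fin.last D.n) ∧ ∀ i, (D.bag i).card ≤ r + 1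

/-- The rooted pathwidth of `G` at `x`. -/
noncomputable def rpw (G : SimpleGraph V) (x : V) : ℕ := sInf {r | rpwLE G x r}

/-- `G` has a cycle of length `n`. -/
def HasCycleLen (G : SimpleGraph V) (n : ℕ) : Prop :=
  ∃ (x : V) (c : G.Walk x x), c.IsCycle ∧ c.length = n

/-- The circumference of `G` equals `t` (it is `0` if `G` is acyclic). -/
def CircumEq (G : SimpleGraph V) (t : ℕ) : Prop :=
  (∀ n, HasCycleLen G n → n ≤ t) ∧ (t = 0 ∨ HasCycleLen G t)

/-- `G` is `k`-connected: it has more than `k` vertices and stays connected after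
deleting any set of fewer than `k` vertices. -/
def KConn (G : SimpleGraph V) (k : ℕ) : Prop :=
  k < Nat.card V ∧
  ∀ S : Set V, S.Finite → S.ncard < k → (G.induce Sᶜ).Connected

/-- `G` has `k` pairwise vertex-disjoint cycles, each of length at least `t`. -/
def HasKDisjointCyclesLen (G : SimpleGraph V) (k t : ℕ) : Prop :=
  ∃ c : Fin k → Σ x : V, G.Walk x x,
    (∀ m, (c m).2.IsCycle ∧ t ≤ (c m).2.length) ∧
    ∀ m m', m ≠ m' → List.Disjoint (c m).2.support (c m').2.support

/-- `H` is a minor of `G`, witnessed by branch sets `br`. -/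
def IsMinorWithBranch (G : SimpleGraph V) (H : SimpleGraph W) (br : W → Set V) : Prop :=
  (∀ w, (G.induce (br w)).Connected) ∧
  (∀ w w', w ≠ w' → Disjoint (br w) (br w')) ∧
  (∀ ⦃w w'⦄, H.Adj w w' → ∃ u ∈ br w, ∃ u' ∈ br w', G.Adj u u')

/-- `H` is a minor of `G`. -/
def HasMinor (G : SimpleGraph V) (H : SimpleGraph W) : Prop :=
  ∃ br : W → Set V, IsMinorWithBranch G H br



/-- A rooted forest on `V`, given by a parent function together with a consistent
height function (the height of a vertex is its distance to the root of its component). -/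
structure RootedForest (V : Type u) where
  parent : V → Option V
  height : V → ℕ
  height_root : ∀ x, parent x = none → height x = 0
  height_child : ∀ ⦃x y⦄, parent x = some y → height x = height y + 1

/-- `x` is an ancestor of `y` (possibly `x = y`). -/
def RootedForest.Ancestor (F : RootedForest V) (x y : V) : Prop :=
  Relation.ReflTransGen (fun a b => F.parent a = some b) y x

/-- `x` is a proper ancestor of `y`. -/
def RootedForest.ProperAncestor (F : RootedForest V) (x y : V) : Prop :=
  Relation.TransGen (fun a b => F.parent a = some b) y x

/-- The treedepth of `G` is at most `d`: there is a rooted forest of height at most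
`d - 1` on `V(G)` whose closure contains `G`. -/
def treedepthLE (G : SimpleGraph V) (d : ℕ) : Prop :=
  ∃ F : RootedForest V, (∀ x, F.height x + 1 ≤ d) ∧
    ∀ ⦃x y⦄, G.Adj x y → F.ProperAncestor x y ∨ F.ProperAncestor y x

/-- Vertices of the complete binary tree of height `h`: binary strings of length at
most `h`; the parent of a nonempty string is its tail, the root is the empty string. -/
abbrev CBTVert (h : ℕ) := {l : List Bool // l.length ≤ h}

/-- The complete binary tree of height `h` as a simple graph. -/
def CBT (h : ℕ) : SimpleGraph (CBTVert h) where
  Adj u w := (∃ b, u.val = b :: w.val) ∨ (∃ b, w.val = b :: u.val)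
  symm := ⟨by intro u w hv; tauto⟩
  loopless := by
    refine ⟨?_⟩
    rintro u (⟨b, hb⟩ | ⟨b, hb⟩) <;>
    · have := congrArg List.length hb
      simp at this

/-- The root of the complete binary tree. -/
def CBTroot (h : ℕ) : CBTVert h := ⟨[], by simp⟩

/-- The `m`-th leaf (in left-to-right order) of the complete binary tree of
height `h`: the binary string of length `h` whose bits are the binary digits of `m`,
most significant first. -/
def leafIdx (h : ℕ) (m : Fin (2 ^ h)) : CBTVert h :=
  ⟨(List.range h).map fun i => m.val.testBit (h - 1 - i), by simp⟩

/-- The graph obtained from `G` by adding `k` dominant vertices. -/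
def addDominant (G : SimpleGraph V) (k : ℕ) : SimpleGraph (V ⊕ Fin k) where
  Adj x y := (∃ a b, x = .inl a ∧ y = .inl b ∧ G.Adj a b) ∨
             (∃ a c, x = .inl a ∧ y = .inr c) ∨
             (∃ c a, x = .inr c ∧ y = .inl a) ∨
             (∃ c c', x = .inr c ∧ y = .inr c' ∧ c ≠ c')
  symm := by
    refine ⟨?_⟩
    rintro x y (⟨a,b,rfl,rfl,hab⟩|⟨a,c,rfl,rfl⟩|⟨c,a,rfl,rfl⟩|⟨c,c',rfl,rfl,hcc⟩)
    · exact Or.inl ⟨b,a,rfl,rfl,hab.symm⟩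
    · exact Or.inr (Or.inr (Or.inl ⟨c,a,rfl,rfl⟩))
    · exact Or.inr (Or.inl ⟨a,c,rfl,rfl⟩)
    · exact Or.inr (Or.inr (Or.inr ⟨c',c,rfl,rfl,hcc.symm⟩))
  loopless := by
    refine ⟨?_⟩
    rintro x (⟨a,b,rfl,h,hab⟩|⟨a,c,rfl,h⟩|⟨c,a,rfl,h⟩|⟨c,c',rfl,h,hcc⟩)
    · cases Sum.inl.inj h; exact G.irrefl hab
    · simp at h
    · simp at h
    · cases Sum.inr.inj h; exact hcc rfl

/-- The minimum size of a transversal of `G` (a set of vertices meeting all cycles). -/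
noncomputable def tau (G : SimpleGraph V) : ℕ :=
  sInf {n | ∃ S : Set V, S.ncard = n ∧ (G.induce Sᶜ).IsAcyclic}

/-- `x` is a cut-vertex of `G`. -/
def IsCutVertex (G : SimpleGraph V) (x : V) : Prop :=
  ∃ (u w : V) (hu : u ≠ x) (hw : w ≠ x),
    G.Reachable u w ∧ ¬ (G.induce {y | y ≠ x}).Reachable ⟨u, hu⟩ ⟨w, hw⟩

/-- A block of `G`: a maximal 2-connected subgraph, or a bridge edge,
or an isolated vertex. -/
def IsBlock (G : SimpleGraph V) (B : G.Subgraph) : Prop :=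
  (KConn B.coe 2 ∧ ∀ B' : G.Subgraph, B ≤ B' → KConn B'.coe 2 → B' = B) ∨
  (∃ (u w : V) (huw : G.Adj u w), G.IsBridge s(u, w) ∧ B = G.subgraphOfAdj huw) ∨
  (∃ x : V, (∀ u, ¬ G.Adj x u) ∧ B = G.singletonSubgraph x)

/-- The block-cut-forest of `G`: vertices are the cut-vertices and the blocks of `G`,
with a cut-vertex adjacent to exactly the blocks containing it. -/
def BCF (G : SimpleGraph V) :
    SimpleGraph ({x : V // IsCutVertex G x} ⊕ {B : G.Subgraph // IsBlock G B}) where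
  Adj x y := (∃ v B, x = .inl v ∧ y = .inr B ∧ v.val ∈ B.val.verts) ∨
             (∃ v B, x = .inr B ∧ y = .inl v ∧ v.val ∈ B.val.verts)
  symm := by
    refine ⟨?_⟩
    rintro x y (⟨v,B,rfl,rfl,hm⟩|⟨v,B,rfl,rfl,hm⟩)
    · exact Or.inr ⟨v,B,rfl,rfl,hm⟩
    · exact Or.inl ⟨v,B,rfl,rfl,hm⟩
  loopless := by
    refine ⟨?_⟩
    rintro x (⟨v,B,rfl,h,_⟩|⟨v,B,rfl,h,_⟩) <;> simp at h

/-- The octahedron `K_{2,2,2}` minus the edges of a triangle: parts are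
`{i} × {0,1}`; the deleted triangle consists of the vertices `(i, 0)`. -/
def Qgraph : SimpleGraph (Fin 3 × Fin 2) where
  Adj x y := x.1 ≠ y.1 ∧ ¬(x.2 = 0 ∧ y.2 = 0)
  symm := ⟨fun x y h => ⟨h.1.symm, fun hc => h.2 ⟨hc.2, hc.1⟩⟩⟩
  loopless := ⟨fun x h => h.1 rfl⟩

/-- The disjoint union of two triangles. -/
def TwoTriangles : SimpleGraph (Fin 3 ⊕ Fin 3) where
  Adj x y := (∃ a b, x = .inl a ∧ y = .inl b ∧ a ≠ b) ∨
             (∃ a b, x = .inr a ∧ y = .inr b ∧ a ≠ b)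
  symm := by
    refine ⟨?_⟩
    rintro x y (⟨a,b,rfl,rfl,hab⟩|⟨a,b,rfl,rfl,hab⟩)
    · exact Or.inl ⟨b,a,rfl,rfl,hab.symm⟩
    · exact Or.inr ⟨b,a,rfl,rfl,hab.symm⟩
  loopless := by
    refine ⟨?_⟩
    rintro x (⟨a,b,rfl,h,hab⟩|⟨a,b,rfl,h,hab⟩) <;>
    · first
      | (cases Sum.inl.inj h; exact hab rfl)
      | (cases Sum.inr.inj h; exact hab rfl)

/-- `A` contains a subdivision of `B` as a subgraph: branch vertices are given by an
injective map `f`, and each edge of `B` is replaced by a path in `A`; distinct edges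
give internally disjoint paths, and no branch vertex lies in the interior of a path. -/
def ContainsSubdivision (A : SimpleGraph V) (B : SimpleGraph W) : Prop :=
  ∃ (f : W → V) (P : ∀ ⦃u w : W⦄, B.Adj u w → A.Walk (f u) (f w)),
    Function.Injective f ∧
    (∀ ⦃u w : W⦄ (h : B.Adj u w), (P h).IsPath) ∧
    (∀ ⦃u w : W⦄ (h : B.Adj u w) (x : W), f x ∈ (P h).support → x = u ∨ x = w) ∧
    (∀ ⦃u w x y : W⦄ (h : B.Adj u w) (h' : B.Adj x y), s(u, w) ≠ s(x, y) →
      ∀ z, z ∈ (P h).support → z ∈ (P h').support →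
        z ∈ ({f u, f w} : Set V) ∩ {f x, f y})



section Aux

lemma star_acyclic {α : Type*} [DecidableEq α] {G : SimpleGraph α} (v : α)
    (hstar : ∀ ⦃a b : α⦄, G.Adj a b → a = v ∨ b = v) : G.IsAcyclic := by
  intro x c hc
  have hv : v ∈ c.support := by
    cases c with
    | nil => exact absurd rfl hc.ne_nil
    | cons h p =>
      rcases hstar h with rfl | h2
      · exact SimpleGraph.Walk.start_mem_support _
      · rw [SimpleGraph.Walk.support_cons]
        right
        rw [← h2]; exact SimpleGraph.Walk.start_mem_support _
  obtain ⟨q, hq⟩ : ∃ q : G.Walk v v, q.IsCycle := ⟨c.rotate v hv, hc.rotate hv⟩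
  cases q with
  | nil => exact absurd rfl hq.ne_nil
  | cons h p =>
    rename_i y
    cases p with
    | nil => exact G.loopless.irrefl v h
    | cons h2 p2 =>
      rename_i z
      have hyv : y ≠ v := fun he => G.loopless.irrefl v (he ▸ h)
      have hzv : z = v := by
        rcases hstar h2 with rfl | rfl
        · exact absurd rfl hyv
        · rfl
      cases p2 with
      | nil =>
        have := hq.three_le_length
        simp [SimpleGraph.Walk.length_cons] at this
      | cons h3 r =>
        have hnd := hq.2
        rw [SimpleGraph.Walk.support_cons, List.tail_cons, SimpleGraph.Walk.support_cons,
          SimpleGraph.Walk.support_cons] at hnd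
        have hvr : z ∈ r.support := by
          rw [hzv]; exact SimpleGraph.Walk.end_mem_support r
        simp only [List.nodup_cons, List.mem_cons] at hnd
        exact hnd.2.1 hvr

lemma triangle_not_acyclic {α : Type*} {G : SimpleGraph α} {u v w : α}
    (huv : G.Adj u v) (hvw : G.Adj v w) (hwu : G.Adj w u) : ¬ G.IsAcyclic := by
  intro hac
  refine hac (Walk.cons huv (Walk.cons hvw (Walk.cons hwu Walk.nil))) ?_
  rw [SimpleGraph.Walk.isCycle_def]
  refine ⟨?_, by simp, ?_⟩
  · rw [SimpleGraph.Walk.isTrail_def]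
    simp only [SimpleGraph.Walk.edges_cons, SimpleGraph.Walk.edges_nil]
    have h1 : u ≠ v := huv.ne
    have h2 : v ≠ w := hvw.ne
    have h3 : w ≠ u := hwu.ne
    simp [List.nodup_cons, Sym2.eq_iff]
    tauto
  · simp only [SimpleGraph.Walk.support_cons, SimpleGraph.Walk.support_nil, List.tail_cons]
    have h2 : v ≠ w := hvw.ne
    have h3 : w ≠ u := hwu.ne
    have h1 : v ≠ u := huv.ne.symm
    simp [List.nodup_cons]
    tauto

lemma reach_eq {α : Type*} {G : SimpleGraph α} (h : ∀ ⦃a b : α⦄, ¬ G.Adj a b) {x y : α}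
    (hr : G.Reachable x y) : x = y := by
  obtain ⟨p⟩ := hr
  cases p with
  | nil => rfl
  | cons ha p => exact absurd ha (h ·)

lemma mem_eq {α β : Type*} {br : β → Set α}
    (hdisj : ∀ w w', w ≠ w' → Disjoint (br w) (br w')) {w w' : β} {x : α}
    (hx : x ∈ br w) (hx' : x ∈ br w') : w = w' := by
  by_contra h
  exact Set.disjoint_left.mp (hdisj w w' h) hx hx'

lemma qadj_iff {x y : Fin 3 × Fin 2} :
    Qgraph.Adj x y ↔ (x.1 ≠ y.1 ∧ ¬(x.2 = 0 ∧ y.2 = 0)) := Iff.rfl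

instance : DecidableRel Qgraph.Adj :=
  fun x y => decidable_of_iff _ qadj_iff.symm

instance : DecidableRel TwoTriangles.Adj := fun x y =>
  inferInstanceAs (Decidable ((∃ a b, x = .inl a ∧ y = .inl b ∧ a ≠ b) ∨
             (∃ a b, x = .inr a ∧ y = .inr b ∧ a ≠ b)))

lemma fin2_eq_one {n : Fin 2} (h : n ≠ 0) : n = 1 := by omega

lemma pair_eq {x : Fin 3 × Fin 2} {m : Fin 3} {n : Fin 2} (h1 : x.1 = m) (h2 : x.2 = n) :
    x = (m, n) := by
  cases x; simp_all

lemma no_b_singleton {br : Set (Fin 3 × Fin 2)} (hc : (Qgraph.induce br).Connected)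
    (hb : ∀ x ∈ br, x.2 = 0) : ∃ i : Fin 3, br = {(i, 0)} := by
  obtain ⟨⟨x, hx⟩⟩ := hc.nonempty
  have hxx : x = (x.1, 0) := pair_eq rfl (hb x hx)
  refine ⟨x.1, ?_⟩
  have noadj : ∀ ⦃a b : ↥br⦄, ¬ (Qgraph.induce br).Adj a b := by
    rintro ⟨a, ha⟩ ⟨b, hb'⟩ h
    exact (qadj_iff.mp h).2 ⟨hb a ha, hb b hb'⟩
  ext y
  simp only [Set.mem_singleton_iff]
  constructor
  · intro hy
    have := reach_eq noadj (hc.preconnected ⟨y, hy⟩ ⟨x, hx⟩)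
    rw [Subtype.mk.injEq] at this
    rw [this, ← hxx]
  · rintro rfl
    rw [← hxx]; exact hx

set_option synthInstance.maxSize 2000 in
lemma four_b_false : ∀ x1 x2 x3 x4 : Fin 3 × Fin 2, x1.2 = 1 → x2.2 = 1 → x3.2 = 1 →
    x4.2 = 1 → x1 ≠ x2 → x1 ≠ x3 → x1 ≠ x4 → x2 ≠ x3 → x2 ≠ x4 → x3 ≠ x4 → False := by
  decide

set_option synthInstance.maxSize 2000 in
lemma three_nbrs_false : ∀ (i : Fin 3) (v1 v2 v3 : Fin 3 × Fin 2), v1.2 = 1 → v2.2 = 1 →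
    v3.2 = 1 → v1.1 ≠ i → v2.1 ≠ i → v3.1 ≠ i → v1 ≠ v2 → v1 ≠ v3 → v2 ≠ v3 → False := by
  decide

lemma qadj1 {i : Fin 3} {u : Fin 3 × Fin 2} (h : Qgraph.Adj (i, 0) u) :
    u.2 = 1 ∧ u.1 ≠ i :=
  ⟨fin2_eq_one (fun h0 => (qadj_iff.mp h).2 ⟨rfl, h0⟩), fun h1 => (qadj_iff.mp h).1 h1.symm⟩

lemma qadj2 {i : Fin 3} {u : Fin 3 × Fin 2} (h : Qgraph.Adj u (i, 0)) :
    u.2 = 1 ∧ u.1 ≠ i := qadj1 h.symm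

lemma fin2cases : ∀ n : Fin 2, n = 0 ∨ n = 1 := by decide

lemma tau_Q : tau Qgraph = 2 := by
  have hmem2 : (2 : ℕ) ∈ {n | ∃ S : Set (Fin 3 × Fin 2), S.ncard = n ∧
      (Qgraph.induce Sᶜ).IsAcyclic} := by
    refine ⟨{((0:Fin 3),(1:Fin 2)), ((1:Fin 3),(1:Fin 2))}, Set.ncard_pair (by decide), ?_⟩
    have hc : ((2:Fin 3),(1:Fin 2)) ∈ ({((0:Fin 3),(1:Fin 2)), ((1:Fin 3),(1:Fin 2))} :
        Set (Fin 3 × Fin 2))ᶜ := by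
      simp only [Set.mem_compl_iff, Set.mem_insert_iff, Set.mem_singleton_iff]
      decide
    apply star_acyclic (v := ⟨((2:Fin 3),(1:Fin 2)), hc⟩)
    rintro ⟨a, ha⟩ ⟨b, hb⟩ hadj
    simp only [Set.mem_compl_iff, Set.mem_insert_iff, Set.mem_singleton_iff, not_or] at ha hb
    have hadj' : Qgraph.Adj a b := hadj
    simp only [Subtype.mk.injEq]
    revert hadj'
    revert ha hb
    revert a b
    decide
  have hlb : ∀ n ∈ {n | ∃ S : Set (Fin 3 × Fin 2), S.ncard = n ∧
      (Qgraph.induce Sᶜ).IsAcyclic}, 2 ≤ n := by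
    rintro n ⟨S, rfl, hac⟩
    by_contra hlt
    push_neg at hlt
    have hsub : ∀ a ∈ S, ∀ b ∈ S, a = b :=
      (Set.ncard_le_one (Set.toFinite S)).mp (by omega)
    have hni : ∀ x y : Fin 3 × Fin 2, x ∈ S → x ≠ y → y ∉ S :=
      fun x y hx hxy hy => hxy (hsub x hx y hy)
    have tri : ∀ u v w : Fin 3 × Fin 2, u ∉ S → v ∉ S → w ∉ S →
        Qgraph.Adj u v → Qgraph.Adj v w → Qgraph.Adj w u → False := by
      intro u v w hu hv hw h1 h2 h3
      exact triangle_not_acyclic (G := Qgraph.induce Sᶜ)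
        (u := ⟨u, hu⟩) (v := ⟨v, hv⟩) (w := ⟨w, hw⟩) h1 h2 h3 hac
    by_cases h0 : ((0:Fin 3),(1:Fin 2)) ∈ S
    · exact tri (0,0) (1,1) (2,1) (hni _ _ h0 (by decide)) (hni _ _ h0 (by decide))
        (hni _ _ h0 (by decide)) (by decide) (by decide) (by decide)
    by_cases h1 : ((1:Fin 3),(1:Fin 2)) ∈ S
    · exact tri (1,0) (0,1) (2,1) (hni _ _ h1 (by decide)) (hni _ _ h1 (by decide))
        (hni _ _ h1 (by decide)) (by decide) (by decide) (by decide)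
    by_cases h2 : ((2:Fin 3),(1:Fin 2)) ∈ S
    · exact tri (2,0) (0,1) (1,1) (hni _ _ h2 (by decide)) (hni _ _ h2 (by decide))
        (hni _ _ h2 (by decide)) (by decide) (by decide) (by decide)
    · exact tri (0,1) (1,1) (2,1) h0 h1 h2 (by decide) (by decide) (by decide)
  exact le_antisymm (Nat.sInf_le hmem2) (le_csInf ⟨2, hmem2⟩ hlb)

theorem noK4 : ¬ HasMinor Qgraph (completeGraph (Fin 4)) := by
  rintro ⟨br, hconn, hdisj, hadj⟩
  -- some branch set contains no top vertex
  have h1 : ∃ w : Fin 4, ∀ x ∈ br w, x.2 = 0 := by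
    by_contra h
    push_neg at h
    choose f hm h2 using h
    have h2' : ∀ w, (f w).2 = 1 := fun w => fin2_eq_one (h2 w)
    have hne : ∀ w w' : Fin 4, w ≠ w' → f w ≠ f w' := by
      intro w w' hww hf
      exact hww (mem_eq hdisj (hm w) (hf ▸ hm w'))
    exact four_b_false (f 0) (f 1) (f 2) (f 3) (h2' 0) (h2' 1) (h2' 2) (h2' 3)
      (hne _ _ (by decide)) (hne _ _ (by decide)) (hne _ _ (by decide))
      (hne _ _ (by decide)) (hne _ _ (by decide)) (hne _ _ (by decide))
  obtain ⟨w0, hw0⟩ := h1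
  obtain ⟨i, hbr0⟩ := no_b_singleton (hconn w0) hw0
  obtain ⟨z1, z2, z3, hz12, hz13, hz23, hz1, hz2, hz3⟩ :
      ∃ z1 z2 z3 : Fin 4, z1 ≠ z2 ∧ z1 ≠ z3 ∧ z2 ≠ z3 ∧ z1 ≠ w0 ∧ z2 ≠ w0 ∧ z3 ≠ w0 :=
    (by decide : ∀ w : Fin 4, ∃ z1 z2 z3 : Fin 4,
      z1 ≠ z2 ∧ z1 ≠ z3 ∧ z2 ≠ z3 ∧ z1 ≠ w ∧ z2 ≠ w ∧ z3 ≠ w) w0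
  have key : ∀ z : Fin 4, z ≠ w0 → ∃ v ∈ br z, v.2 = 1 ∧ v.1 ≠ i := by
    intro z hz
    obtain ⟨u, hu, u', hu', hadj'⟩ := hadj (Ne.symm hz : (completeGraph (Fin 4)).Adj w0 z)
    rw [hbr0, Set.mem_singleton_iff] at hu
    subst hu
    refine ⟨u', hu', fin2_eq_one (fun h0 => (qadj_iff.mp hadj').2 ⟨rfl, h0⟩), fun h1 => (qadj_iff.mp hadj').1 h1.symm⟩
  obtain ⟨v1, hv1, hv1b, hv1i⟩ := key z1 hz1
  obtain ⟨v2, hv2, hv2b, hv2i⟩ := key z2 hz2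
  obtain ⟨v3, hv3, hv3b, hv3i⟩ := key z3 hz3
  have hne : ∀ (z z' : Fin 4) (v : Fin 3 × Fin 2), z ≠ z' → v ∈ br z → v ∈ br z' → False :=
    fun z z' v hzz hv hv' => hzz (mem_eq hdisj hv hv')
  exact three_nbrs_false i v1 v2 v3 hv1b hv2b hv3b hv1i hv2i hv3i
    (fun h => hne z1 z2 v1 hz12 hv1 (h ▸ hv2)) (fun h => hne z1 z3 v1 hz13 hv1 (h ▸ hv3))
    (fun h => hne z2 z3 v2 hz23 hv2 (h ▸ hv3))

theorem noTT : ¬ HasMinor Qgraph TwoTriangles := by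
  rintro ⟨br, hconn, hdisj, hadj⟩
  have hex : ∀ w, ∃ x, x ∈ br w := by
    intro w
    obtain ⟨⟨x, hx⟩⟩ := (hconn w).nonempty
    exact ⟨x, hx⟩
  choose f hf using hex
  have hinj : Function.Injective f := fun w w' h => mem_eq hdisj (hf w) (h ▸ hf w')
  have hbij : Function.Bijective f :=
    (Fintype.bijective_iff_injective_and_card f).mpr ⟨hinj, by decide⟩
  have hsingle : ∀ w, br w = {f w} := by
    intro w
    ext y
    simp only [Set.mem_singleton_iff]
    constructor
    · intro hy
      obtain ⟨w', rfl⟩ := hbij.2 y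
      rw [mem_eq hdisj hy (hf w')]
    · rintro rfl; exact hf w
  -- the three bottom vertices have preimages
  obtain ⟨p0, hp0⟩ := hbij.2 ((0 : Fin 3), (0 : Fin 2))
  obtain ⟨p1, hp1⟩ := hbij.2 ((1 : Fin 3), (0 : Fin 2))
  obtain ⟨p2, hp2⟩ := hbij.2 ((2 : Fin 3), (0 : Fin 2))
  have hne : ∀ (m m' : Fin 3) (w w' : Fin 3 ⊕ Fin 3), f w = (m, 0) → f w' = (m', 0) →
      m ≠ m' → w ≠ w' := by
    rintro m m' w w' hw hw' hmm rfl
    rw [hw] at hw'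
    exact hmm (congrArg Prod.fst hw')
  have final : ∀ (m m' : Fin 3) (w w' : Fin 3 ⊕ Fin 3), f w = (m, 0) → f w' = (m', 0) →
      TwoTriangles.Adj w w' → False := by
    intro m m' w w' hw hw' hA
    obtain ⟨u, hu, u', hu', hadj'⟩ := hadj hA
    rw [hsingle, Set.mem_singleton_iff] at hu hu'
    subst hu; subst hu'
    rw [hw] at hadj'
    rw [hw'] at hadj'
    exact (qadj_iff.mp hadj').2 ⟨rfl, rfl⟩
  have htwo : ∀ w0 w1 w2 : Fin 3 ⊕ Fin 3, w0 ≠ w1 → w0 ≠ w2 → w1 ≠ w2 →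
      TwoTriangles.Adj w0 w1 ∨ TwoTriangles.Adj w0 w2 ∨ TwoTriangles.Adj w1 w2 := by
    decide
  rcases htwo p0 p1 p2 (hne 0 1 _ _ hp0 hp1 (by decide)) (hne 0 2 _ _ hp0 hp2 (by decide))
      (hne 1 2 _ _ hp1 hp2 (by decide)) with h | h | h
  · exact final 0 1 p0 p1 hp0 hp1 h
  · exact final 0 2 p0 p2 hp0 hp2 h
  · exact final 1 2 p1 p2 hp1 hp2 h

set_option synthInstance.maxSize 4000 in
theorem noK23 : ¬ HasMinor Qgraph (completeBipartiteGraph (Fin 2) (Fin 3)) := by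
  rintro ⟨br, hconn, hdisj, hadj⟩
  have hK : ∀ (s : Fin 2) (r : Fin 3),
      (completeBipartiteGraph (Fin 2) (Fin 3)).Adj (.inl s) (.inr r) :=
    fun s r => Or.inl ⟨rfl, rfl⟩
  -- no four branch sets can all contain a top vertex
  have noFour : ∀ w1 w2 w3 w4 : Fin 2 ⊕ Fin 3, w1 ≠ w2 → w1 ≠ w3 → w1 ≠ w4 → w2 ≠ w3 →
      w2 ≠ w4 → w3 ≠ w4 → (∃ x ∈ br w1, x.2 ≠ 0) → (∃ x ∈ br w2, x.2 ≠ 0) →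
      (∃ x ∈ br w3, x.2 ≠ 0) → (∃ x ∈ br w4, x.2 ≠ 0) → False := by
    rintro w1 w2 w3 w4 h12 h13 h14 h23 h24 h34 ⟨x1, hx1, hb1⟩ ⟨x2, hx2, hb2⟩ ⟨x3, hx3, hb3⟩
      ⟨x4, hx4, hb4⟩
    have hne : ∀ (z z' : Fin 2 ⊕ Fin 3) (v v' : Fin 3 × Fin 2), z ≠ z' → v ∈ br z →
        v' ∈ br z' → v ≠ v' := by
      rintro z z' v v' hzz hv hv' rfl
      exact hzz (mem_eq hdisj hv hv')
    exact four_b_false x1 x2 x3 x4 (fin2_eq_one hb1) (fin2_eq_one hb2) (fin2_eq_one hb3)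
      (fin2_eq_one hb4) (hne _ _ _ _ h12 hx1 hx2) (hne _ _ _ _ h13 hx1 hx3)
      (hne _ _ _ _ h14 hx1 hx4) (hne _ _ _ _ h23 hx2 hx3) (hne _ _ _ _ h24 hx2 hx4)
      (hne _ _ _ _ h34 hx3 hx4)
  -- there are two branch sets with no top vertex
  have h2free : ∃ w1 w2 : Fin 2 ⊕ Fin 3, w1 ≠ w2 ∧ (∀ x ∈ br w1, x.2 = 0) ∧
      (∀ x ∈ br w2, x.2 = 0) := by
    by_contra hcon
    push_neg at hcon
    by_cases hx : ∃ w0, ∀ x ∈ br w0, x.2 = 0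
    · obtain ⟨w0, hw0⟩ := hx
      have hall : ∀ w, w0 ≠ w → ∃ x ∈ br w, x.2 ≠ 0 := fun w hw => hcon w0 w hw hw0
      obtain ⟨z1, z2, z3, z4, h12, h13, h14, h23, h24, h34, hz1, hz2, hz3, hz4⟩ :
          ∃ z1 z2 z3 z4 : Fin 2 ⊕ Fin 3, z1 ≠ z2 ∧ z1 ≠ z3 ∧ z1 ≠ z4 ∧ z2 ≠ z3 ∧ z2 ≠ z4 ∧
            z3 ≠ z4 ∧ w0 ≠ z1 ∧ w0 ≠ z2 ∧ w0 ≠ z3 ∧ w0 ≠ z4 :=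
        (by decide : ∀ w : Fin 2 ⊕ Fin 3, ∃ z1 z2 z3 z4 : Fin 2 ⊕ Fin 3,
          z1 ≠ z2 ∧ z1 ≠ z3 ∧ z1 ≠ z4 ∧ z2 ≠ z3 ∧ z2 ≠ z4 ∧ z3 ≠ z4 ∧
          w ≠ z1 ∧ w ≠ z2 ∧ w ≠ z3 ∧ w ≠ z4) w0
      exact noFour z1 z2 z3 z4 h12 h13 h14 h23 h24 h34 (hall z1 hz1) (hall z2 hz2)
        (hall z3 hz3) (hall z4 hz4)
    · push_neg at hx
      exact noFour (.inl 0) (.inl 1) (.inr 0) (.inr 1) (by decide) (by decide) (by decide)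
        (by decide) (by decide) (by decide) (hx _) (hx _) (hx _) (hx _)
  obtain ⟨w1, w2, hw12, hf1, hf2⟩ := h2free
  obtain ⟨i, hbr1⟩ := no_b_singleton (hconn w1) hf1
  obtain ⟨j, hbr2⟩ := no_b_singleton (hconn w2) hf2
  have hij : i ≠ j := by
    rintro rfl
    apply hw12
    apply mem_eq hdisj (x := ((i : Fin 3), (0 : Fin 2)))
    · rw [hbr1]; rfl
    · rw [hbr2]; rfl
  obtain ⟨k, hki, hkj, hk⟩ : ∃ k : Fin 3, k ≠ i ∧ k ≠ j ∧ ∀ m : Fin 3, m ≠ i → m ≠ j → m = k :=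
    (by decide : ∀ i j : Fin 3, i ≠ j → ∃ k : Fin 3, k ≠ i ∧ k ≠ j ∧
      ∀ m : Fin 3, m ≠ i → m ≠ j → m = k) i j hij
  -- a singleton bottom branch set on the left and one on the right would have to be adjacent
  rcases w1 with s | s <;> rcases w2 with t | t
  · -- both on the left
    have hst : s ≠ t := fun h => hw12 (congrArg Sum.inl h)
    have claim : ∀ r : Fin 3, ∃ x ∈ br (Sum.inr r),
        x = ((k : Fin 3), (1 : Fin 2)) ∨ x = ((i : Fin 3), (1 : Fin 2)) := by
      intro r
      obtain ⟨u, hu, u', hu', hA⟩ := hadj (hK s r)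
      rw [hbr1, Set.mem_singleton_iff] at hu
      subst hu
      obtain ⟨hy2, hy1⟩ := qadj1 hA
      obtain ⟨v, hv, v', hv', hA2⟩ := hadj (hK t r)
      rw [hbr2, Set.mem_singleton_iff] at hv
      subst hv
      obtain ⟨hz2, hz1⟩ := qadj1 hA2
      by_cases hyj : u'.1 = j
      · by_cases hzi : v'.1 = i
        · exact ⟨v', hv', Or.inr (pair_eq hzi hz2)⟩
        · exact ⟨v', hv', Or.inl (pair_eq (hk v'.1 hzi hz1) hz2)⟩
      · exact ⟨u', hu', Or.inl (pair_eq (hk u'.1 hy1 hyj) hy2)⟩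
    choose g hgmem hgval using claim
    have two_eq : g 0 = g 1 ∨ g 0 = g 2 ∨ g 1 = g 2 := by
      rcases hgval 0 with h0 | h0 <;> rcases hgval 1 with h1 | h1 <;>
        rcases hgval 2 with h2 | h2 <;> simp [h0, h1, h2]
    have contra : ∀ r r' : Fin 3, r ≠ r' → g r = g r' → False := by
      intro r r' hrr h
      exact hrr (Sum.inr.inj (mem_eq hdisj (hgmem r) (h ▸ hgmem r')))
    rcases two_eq with h | h | h
    · exact contra 0 1 (by decide) h
    · exact contra 0 2 (by decide) h
    · exact contra 1 2 (by decide) h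
  · -- left / right : they are adjacent in K_{2,3}, but bottom vertices are not adjacent
    obtain ⟨u, hu, u', hu', hA⟩ := hadj (hK s t)
    rw [hbr1, Set.mem_singleton_iff] at hu
    rw [hbr2, Set.mem_singleton_iff] at hu'
    subst hu; subst hu'
    exact (qadj_iff.mp hA).2 ⟨rfl, rfl⟩
  · -- right / left
    obtain ⟨u, hu, u', hu', hA⟩ := hadj (hK t s)
    rw [hbr2, Set.mem_singleton_iff] at hu
    rw [hbr1, Set.mem_singleton_iff] at hu'
    subst hu; subst hu'
    exact (qadj_iff.mp hA).2 ⟨rfl, rfl⟩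
  · -- both on the right
    have hst : s ≠ t := fun h => hw12 (congrArg Sum.inr h)
    obtain ⟨r3, hr3s, hr3t⟩ : ∃ r3 : Fin 3, r3 ≠ s ∧ r3 ≠ t :=
      (by decide : ∀ s t : Fin 3, ∃ r3 : Fin 3, r3 ≠ s ∧ r3 ≠ t) s t
    have claimP : ∀ l : Fin 2, (((k : Fin 3), (1 : Fin 2)) ∈ br (Sum.inl l)) ∨
        ((((i : Fin 3), (1 : Fin 2)) ∈ br (Sum.inl l)) ∧
         (((j : Fin 3), (1 : Fin 2)) ∈ br (Sum.inl l))) := by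
      intro l
      obtain ⟨u, hu, u', hu', hA⟩ := hadj (hK l s)
      rw [hbr1, Set.mem_singleton_iff] at hu'
      subst hu'
      obtain ⟨hu2, hu1⟩ := qadj2 hA
      obtain ⟨v, hv, v', hv', hA2⟩ := hadj (hK l t)
      rw [hbr2, Set.mem_singleton_iff] at hv'
      subst hv'
      obtain ⟨hv2, hv1⟩ := qadj2 hA2
      by_cases hyj : u.1 = j
      · by_cases hzi : v.1 = i
        · exact Or.inr ⟨(pair_eq hzi hv2) ▸ hv, (pair_eq hyj hu2) ▸ hu⟩
        · exact Or.inl ((pair_eq (hk v.1 hzi hv1) hv2) ▸ hv)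
      · exact Or.inl ((pair_eq (hk u.1 hu1 hyj) hu2) ▸ hu)
    have main : ∀ A B : Fin 2, A ≠ B → ((k : Fin 3), (1 : Fin 2)) ∈ br (Sum.inl A) →
        ((i : Fin 3), (1 : Fin 2)) ∈ br (Sum.inl B) →
        ((j : Fin 3), (1 : Fin 2)) ∈ br (Sum.inl B) → False := by
      intro A B hAB hkA hiB hjB
      have hr3 : ∀ x ∈ br (Sum.inr r3), x = ((k : Fin 3), (0 : Fin 2)) := by
        intro x hx
        have e1 : x ≠ (i, 0) := by
          rintro rfl
          exact hr3s (Sum.inr.inj (mem_eq hdisj hx (by rw [hbr1]; rfl)))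
        have e2 : x ≠ (j, 0) := by
          rintro rfl
          exact hr3t (Sum.inr.inj (mem_eq hdisj hx (by rw [hbr2]; rfl)))
        have e3 : x ≠ (i, 1) := by
          rintro rfl
          exact absurd (mem_eq hdisj hx hiB) (by simp)
        have e4 : x ≠ (j, 1) := by
          rintro rfl
          exact absurd (mem_eq hdisj hx hjB) (by simp)
        have e5 : x ≠ (k, 1) := by
          rintro rfl
          exact absurd (mem_eq hdisj hx hkA) (by simp)
        rcases fin2cases x.2 with h2 | h2
        · by_cases hxi : x.1 = i
          · exact absurd (pair_eq hxi h2) e1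
          · by_cases hxj : x.1 = j
            · exact absurd (pair_eq hxj h2) e2
            · exact pair_eq (hk x.1 hxi hxj) h2
        · by_cases hxi : x.1 = i
          · exact absurd (pair_eq hxi h2) e3
          · by_cases hxj : x.1 = j
            · exact absurd (pair_eq hxj h2) e4
            · exact absurd (pair_eq (hk x.1 hxi hxj) h2) e5
      obtain ⟨u, hu, u', hu', hA2⟩ := hadj (hK A r3)
      have hu'k : u' = (k, 0) := hr3 u' hu'
      subst hu'k
      obtain ⟨hu2, hu1⟩ := qadj2 hA2
      by_cases hui : u.1 = i
      · have : u = ((i : Fin 3), (1 : Fin 2)) := pair_eq hui hu2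
        exact hAB (Sum.inl.inj (mem_eq hdisj (this ▸ hu) hiB))
      · by_cases huj : u.1 = j
        · have : u = ((j : Fin 3), (1 : Fin 2)) := pair_eq huj hu2
          exact hAB (Sum.inl.inj (mem_eq hdisj (this ▸ hu) hjB))
        · exact hu1 (hk u.1 hui huj)
    rcases claimP 0 with hP0 | hP0 <;> rcases claimP 1 with hP1 | hP1
    · exact absurd (mem_eq hdisj hP0 hP1) (by simp)
    · exact main 0 1 (by decide) hP0 hP1.1 hP1.2
    · exact main 1 0 (by decide) hP1 hP0.1 hP0.2
    · exact absurd (mem_eq hdisj hP0.1 hP1.1) (by simp)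

end Aux

/-- The octahedron minus a triangle `Q` has transversal number 2
and contains none of `K₄`, `K_{2,3}`, `K₃ ∪ K₃` as a minor. -/
theorem stmt18 :
    tau Qgraph = 2 ∧
    ¬ HasMinor Qgraph (completeGraph (Fin 4)) ∧
    ¬ HasMinor Qgraph (completeBipartiteGraph (Fin 2) (Fin 3)) ∧
    ¬ HasMinor Qgraph TwoTriangles :=
  ⟨tau_Q, noK4, noK23, noTT⟩
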